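/- Let P : [0,T] → S^n satisfy, for all 0 ≤ t ≤ T, P(t) − G(T) ≤ ∫_t^T [P(s)A(s) + A(s)ᵀP(s) + C(s)ᵀP(s)C(s) + Q̂] ds in the Loewner order, where P is continuous and nonnegative (P(t) ≥ 0), A, C : [0,T] → ℝ^{n×n} are continuous, Q̂ ≥ 0, and 0 ≤ G(T) ≤ Ĝ. Then |P(t)| ≤ (|Ĝ| + T|Q̂|) e^{∫_t^T (2|A(s)| + |C(s)|²) ds} for all t ∈ [0,T]. -/

import Mathlib

open Matrix
open scoped Matrix.Norms.L2Operator

attribute [local instance] Matrix.instL2OpNormedSpace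

open MeasureTheory intervalIntegral

section helpers
variable {n : ℕ}

lemma aux_inner_eq_dot (x y : Fin n → ℝ) :
    @inner ℝ _ _ ((WithLp.equiv 2 (Fin n → ℝ)).symm x) ((WithLp.equiv 2 (Fin n → ℝ)).symm y)
      = x ⬝ᵥ y := by
  simp [PiLp.inner_apply, dotProduct, RCLike.inner_apply, mul_comm]

lemma aux_quad_le_norm (M : Matrix (Fin n) (Fin n) ℝ) (x : Fin n → ℝ) :
    x ⬝ᵥ M *ᵥ x ≤ ‖M‖ * (x ⬝ᵥ x) := by
  set x' : EuclideanSpace ℝ (Fin n) := (WithLp.equiv 2 (Fin n → ℝ)).symm x with hx'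
  have h1 : x ⬝ᵥ M *ᵥ x = @inner ℝ _ _ x' ((WithLp.equiv 2 (Fin n → ℝ)).symm (M *ᵥ x)) :=
    (aux_inner_eq_dot x (M *ᵥ x)).symm
  have h2 : x ⬝ᵥ x = ‖x'‖ ^ 2 := by
    rw [← real_inner_self_eq_norm_sq]; exact (aux_inner_eq_dot x x).symm
  rw [h1, h2]
  calc @inner ℝ _ _ x' ((WithLp.equiv 2 (Fin n → ℝ)).symm (M *ᵥ x))
      ≤ ‖x'‖ * ‖(WithLp.equiv 2 (Fin n → ℝ)).symm (M *ᵥ x)‖ := real_inner_le_norm _ _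
    _ ≤ ‖x'‖ * (‖M‖ * ‖x'‖) :=
        mul_le_mul_of_nonneg_left (M.l2_opNorm_mulVec x') (norm_nonneg _)
    _ = ‖M‖ * ‖x'‖ ^ 2 := by ring

open scoped MatrixOrder in
lemma aux_norm_le_of_quad {M : Matrix (Fin n) (Fin n) ℝ} (hM : M.PosSemidef) {c : ℝ} (hc : 0 ≤ c)
    (h : ∀ x : Fin n → ℝ, x ⬝ᵥ M *ᵥ x ≤ c * (x ⬝ᵥ x)) : ‖M‖ ≤ c := by
  obtain ⟨B, rfl⟩ : ∃ B : Matrix (Fin n) (Fin n) ℝ, M = Bᴴ * B :=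
    CStarAlgebra.nonneg_iff_eq_star_mul_self.mp hM.nonneg
  rw [Matrix.l2_opNorm_conjTranspose_mul_self]
  have hB : ‖B‖ ≤ Real.sqrt c := by
    rw [Matrix.l2_opNorm_def]
    apply ContinuousLinearMap.opNorm_le_bound _ (Real.sqrt_nonneg c)
    intro x
    have key : ‖(Matrix.toEuclideanLin.trans LinearMap.toContinuousLinearMap B) x‖ ^ 2
        ≤ (Real.sqrt c * ‖x‖) ^ 2 := by
      have happ : (Matrix.toEuclideanLin.trans LinearMap.toContinuousLinearMap B) x
          = (WithLp.equiv 2 (Fin n → ℝ)).symm (B *ᵥ (WithLp.equiv 2 (Fin n → ℝ) x)) := by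
        simp [Matrix.toEuclideanLin_apply]
      rw [happ, ← real_inner_self_eq_norm_sq, aux_inner_eq_dot]
      set y := WithLp.equiv 2 (Fin n → ℝ) x with hy
      have hyx : (y ⬝ᵥ y) = ‖x‖ ^ 2 := by
        rw [← real_inner_self_eq_norm_sq, ← aux_inner_eq_dot]
        rfl
      have hdot : (B *ᵥ y) ⬝ᵥ (B *ᵥ y) = y ⬝ᵥ (Bᴴ * B) *ᵥ y := by
        rw [← Matrix.mulVec_mulVec, Matrix.dotProduct_mulVec y, Matrix.vecMul_conjTranspose]
        simp [dotProduct_comm]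
      rw [hdot]
      calc y ⬝ᵥ (Bᴴ * B) *ᵥ y ≤ c * (y ⬝ᵥ y) := h y
        _ = (Real.sqrt c * ‖x‖) ^ 2 := by rw [hyx, mul_pow, Real.sq_sqrt hc]
    have := Real.sqrt_le_sqrt key
    rwa [Real.sqrt_sq (norm_nonneg _), Real.sqrt_sq (by positivity)] at this
  calc ‖B‖ * ‖B‖ ≤ Real.sqrt c * Real.sqrt c :=
        mul_le_mul hB hB (norm_nonneg _) (Real.sqrt_nonneg c)
    _ = c := Real.mul_self_sqrt hc

lemma aux_gronwall_int {T K : ℝ} (hT : 0 < T) {φ f : ℝ → ℝ}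
    (hφ : ContinuousOn φ (Set.Icc 0 T)) (hφ0 : ∀ s ∈ Set.Icc (0:ℝ) T, 0 ≤ φ s)
    (hf : ContinuousOn f (Set.Icc 0 T))
    (key : ∀ r ∈ Set.Icc (0:ℝ) T, f r ≤ K + ∫ s in r..T, φ s * f s) :
    ∀ t ∈ Set.Icc (0:ℝ) T, f t ≤ K * Real.exp (∫ s in t..T, φ s) := by
  intro t ht
  have hu : ContinuousOn (fun s => φ s * f s) (Set.Icc 0 T) := hφ.mul hf
  set u : ℝ → ℝ := fun s => φ s * f s with hu_def
  set g : ℝ → ℝ := fun r => ∫ s in r..T, u s with hg_def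
  set ψ : ℝ → ℝ := fun r => ∫ s in r..T, φ s with hψ_def
  have hgcont : ContinuousOn g (Set.Icc 0 T) := by
    have := continuousOn_primitive_interval_left (f := u) (μ := volume)
      (by rw [Set.uIcc_of_le hT.le]; exact hu.integrableOn_Icc)
    rwa [Set.uIcc_of_le hT.le] at this
  have hψcont : ContinuousOn ψ (Set.Icc 0 T) := by
    have := continuousOn_primitive_interval_left (f := φ) (μ := volume)
      (by rw [Set.uIcc_of_le hT.le]; exact hφ.integrableOn_Icc)
    rwa [Set.uIcc_of_le hT.le] at this
  set h : ℝ → ℝ := fun r => (K + g r) * Real.exp (-ψ r) with hh_def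
  have hhcont : ContinuousOn h (Set.Icc 0 T) :=
    (continuousOn_const.add hgcont).mul ((hψcont.neg).rexp)
  have hderiv : ∀ x ∈ Set.Ioo (0:ℝ) T,
      HasDerivAt h ((0 + -u x) * Real.exp (-ψ x) + (K + g x) * (Real.exp (-ψ x) * φ x)) x := by
    intro x hx
    have hxI : x ∈ Set.Icc (0:ℝ) T := Set.Ioo_subset_Icc_self hx
    have hsub : Set.uIcc x T ⊆ Set.Icc 0 T := by
      rw [Set.uIcc_of_le hx.2.le]; exact Set.Icc_subset_Icc hx.1.le le_rfl
    have hg' : HasDerivAt g (-u x) x := by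
      apply integral_hasDerivAt_left ((hu.mono hsub).intervalIntegrable)
        (ContinuousOn.stronglyMeasurableAtFilter isOpen_Ioo
          (hu.mono Set.Ioo_subset_Icc_self) x hx)
      exact (hu x hxI).continuousAt (Icc_mem_nhds hx.1 hx.2)
    have hψ' : HasDerivAt ψ (-φ x) x := by
      apply integral_hasDerivAt_left ((hφ.mono hsub).intervalIntegrable)
        (ContinuousOn.stronglyMeasurableAtFilter isOpen_Ioo
          (hφ.mono Set.Ioo_subset_Icc_self) x hx)
      exact (hφ x hxI).continuousAt (Icc_mem_nhds hx.1 hx.2)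
    have hexp : HasDerivAt (fun r => Real.exp (-ψ r)) (Real.exp (-ψ x) * φ x) x := by
      have := (hψ'.neg).exp
      simpa using this
    exact ((hasDerivAt_const x K).add hg').mul hexp
  have hmono : MonotoneOn h (Set.Icc 0 T) := by
    apply monotoneOn_of_deriv_nonneg (convex_Icc 0 T) hhcont
    · rw [interior_Icc]
      intro x hx
      exact ((hderiv x hx).differentiableAt).differentiableWithinAt
    · rw [interior_Icc]
      intro x hx
      rw [(hderiv x hx).deriv]
      have hxI : x ∈ Set.Icc (0:ℝ) T := Set.Ioo_subset_Icc_self hx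
      have hk := key x hxI
      have hφx := hφ0 x hxI
      have hE : (0:ℝ) < Real.exp (-ψ x) := Real.exp_pos _
      have hux : u x ≤ φ x * (K + g x) := by
        have := mul_le_mul_of_nonneg_left hk hφx
        simpa [hu_def, hg_def] using this
      nlinarith [hE, hux]
  have hT_mem : (T:ℝ) ∈ Set.Icc (0:ℝ) T := ⟨hT.le, le_rfl⟩
  have hhT : h T = K := by
    simp [hh_def, hg_def, hψ_def, intervalIntegral.integral_same]
  have hle : h t ≤ K := by
    rw [← hhT]; exact hmono ht hT_mem ht.2
  have hE : (0:ℝ) < Real.exp (ψ t) := Real.exp_pos _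
  have h2 : K + g t ≤ K * Real.exp (ψ t) := by
    have := mul_le_mul_of_nonneg_right hle (le_of_lt hE)
    calc K + g t = (K + g t) * Real.exp (-ψ t) * Real.exp (ψ t) := by
          rw [mul_assoc, ← Real.exp_add]; simp
      _ ≤ K * Real.exp (ψ t) := this
  calc f t ≤ K + g t := key t ht
    _ ≤ K * Real.exp (ψ t) := h2

end helpers

/-- Grönwall-type a priori bound, integral form (Proposition 3.1). -/
theorem apriori_bound_integral_form {n : ℕ} (T : ℝ) (hT : 0 < T)
    (A C : ℝ → Matrix (Fin n) (Fin n) ℝ)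
    (hA : ContinuousOn A (Set.Icc 0 T)) (hC : ContinuousOn C (Set.Icc 0 T))
    (P : ℝ → Matrix (Fin n) (Fin n) ℝ)
    (Qhat Ghat GT : Matrix (Fin n) (Fin n) ℝ)
    (hQhat : Qhat.PosSemidef)
    (hGT : GT.PosSemidef) (hGTle : (Ghat - GT).PosSemidef)
    (hPcont : ContinuousOn P (Set.Icc 0 T))
    (hPpos : ∀ t ∈ Set.Icc (0:ℝ) T, (P t).PosSemidef)
    (hineq : ∀ t ∈ Set.Icc (0:ℝ) T,
      ((∫ s in t..T, (P s * A s + (A s)ᵀ * P s + (C s)ᵀ * P s * C s + Qhat)) -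
        (P t - GT)).PosSemidef) :
    ∀ t ∈ Set.Icc (0:ℝ) T,
      ‖P t‖ ≤ (‖Ghat‖ + T * ‖Qhat‖) *
        Real.exp (∫ s in t..T, (2 * ‖A s‖ + ‖C s‖ ^ 2)) := by
  -- continuity of the transpose map
  have htr : Continuous (fun M : Matrix (Fin n) (Fin n) ℝ => Mᵀ) :=
    LinearMap.continuous_of_finiteDimensional
      (({ toFun := fun M : Matrix (Fin n) (Fin n) ℝ => Mᵀ
          map_add' := fun a b => Matrix.transpose_add a b
          map_smul' := fun c a => Matrix.transpose_smul c a } :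
        Matrix (Fin n) (Fin n) ℝ →ₗ[ℝ] Matrix (Fin n) (Fin n) ℝ))
  have hφcont : ContinuousOn (fun s => 2 * ‖A s‖ + ‖C s‖ ^ 2) (Set.Icc 0 T) :=
    (continuousOn_const.mul hA.norm).add (hC.norm.pow 2)
  have hφ0 : ∀ s ∈ Set.Icc (0:ℝ) T, 0 ≤ 2 * ‖A s‖ + ‖C s‖ ^ 2 := by
    intro s _; positivity
  have hWcont : ContinuousOn
      (fun s => P s * A s + (A s)ᵀ * P s + (C s)ᵀ * P s * C s + Qhat) (Set.Icc 0 T) :=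
    (((hPcont.mul hA).add ((htr.comp_continuousOn hA).mul hPcont)).add
      (((htr.comp_continuousOn hC).mul hPcont).mul hC)).add continuousOn_const
  have hucont : ContinuousOn (fun s => (2 * ‖A s‖ + ‖C s‖ ^ 2) * ‖P s‖) (Set.Icc 0 T) :=
    hφcont.mul hPcont.norm
  -- the pointwise integral inequality on norms
  have key : ∀ r ∈ Set.Icc (0:ℝ) T,
      ‖P r‖ ≤ (‖Ghat‖ + T * ‖Qhat‖) +
        ∫ s in r..T, (2 * ‖A s‖ + ‖C s‖ ^ 2) * ‖P s‖ := by
    intro r hr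
    have hrT : r ≤ T := hr.2
    have hsub : Set.uIcc r T ⊆ Set.Icc 0 T := by
      rw [Set.uIcc_of_le hrT]; exact Set.Icc_subset_Icc hr.1 le_rfl
    set I := ∫ s in r..T, (P s * A s + (A s)ᵀ * P s + (C s)ᵀ * P s * C s + Qhat) with hI
    have h1 : ‖P r‖ ≤ ‖Ghat‖ + ‖I‖ := by
      apply aux_norm_le_of_quad (hPpos r hr) (by positivity)
      intro x
      have hq := (hineq r hr).dotProduct_mulVec_nonneg x
      simp only [Matrix.sub_mulVec, Matrix.add_mulVec, dotProduct_sub, dotProduct_add,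
        star_trivial, ← hI] at hq
      have h2 : x ⬝ᵥ GT *ᵥ x ≤ x ⬝ᵥ Ghat *ᵥ x := by
        have := hGTle.dotProduct_mulVec_nonneg x
        simp only [Matrix.sub_mulVec, dotProduct_sub, star_trivial] at this
        linarith
      have h3 : x ⬝ᵥ Ghat *ᵥ x ≤ ‖Ghat‖ * (x ⬝ᵥ x) := aux_quad_le_norm _ _
      have h4 : x ⬝ᵥ I *ᵥ x ≤ ‖I‖ * (x ⬝ᵥ x) := aux_quad_le_norm _ _
      rw [add_mul]
      linarith
    have hWint : IntervalIntegrable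
        (fun s => ‖P s * A s + (A s)ᵀ * P s + (C s)ᵀ * P s * C s + Qhat‖) volume r T :=
      ((hWcont.norm).mono hsub).intervalIntegrable
    have huQint : IntervalIntegrable
        (fun s => (2 * ‖A s‖ + ‖C s‖ ^ 2) * ‖P s‖ + ‖Qhat‖) volume r T :=
      ((hucont.add continuousOn_const).mono hsub).intervalIntegrable
    have h5 : ‖I‖ ≤ ∫ s in r..T, ((2 * ‖A s‖ + ‖C s‖ ^ 2) * ‖P s‖ + ‖Qhat‖) := by
      calc ‖I‖ ≤ ∫ s in r..T, ‖P s * A s + (A s)ᵀ * P s + (C s)ᵀ * P s * C s + Qhat‖ :=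
            intervalIntegral.norm_integral_le_integral_norm hrT
        _ ≤ ∫ s in r..T, ((2 * ‖A s‖ + ‖C s‖ ^ 2) * ‖P s‖ + ‖Qhat‖) := by
            apply intervalIntegral.integral_mono_on hrT hWint huQint
            intro s hs
            have hAt : ‖(A s)ᵀ‖ = ‖A s‖ := by
              rw [← Matrix.conjTranspose_eq_transpose_of_trivial]
              exact Matrix.l2_opNorm_conjTranspose _
            have hCt : ‖(C s)ᵀ‖ = ‖C s‖ := by
              rw [← Matrix.conjTranspose_eq_transpose_of_trivial]
              exact Matrix.l2_opNorm_conjTranspose _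
            have e1 : ‖P s * A s‖ ≤ ‖P s‖ * ‖A s‖ := norm_mul_le _ _
            have e2 : ‖(A s)ᵀ * P s‖ ≤ ‖A s‖ * ‖P s‖ := by
              calc ‖(A s)ᵀ * P s‖ ≤ ‖(A s)ᵀ‖ * ‖P s‖ := norm_mul_le _ _
                _ = ‖A s‖ * ‖P s‖ := by rw [hAt]
            have e3 : ‖(C s)ᵀ * P s * C s‖ ≤ ‖C s‖ * ‖P s‖ * ‖C s‖ := by
              calc ‖(C s)ᵀ * P s * C s‖ ≤ ‖(C s)ᵀ * P s‖ * ‖C s‖ := norm_mul_le _ _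
                _ ≤ (‖(C s)ᵀ‖ * ‖P s‖) * ‖C s‖ := by
                    exact mul_le_mul_of_nonneg_right (norm_mul_le _ _) (norm_nonneg _)
                _ = ‖C s‖ * ‖P s‖ * ‖C s‖ := by rw [hCt]
            calc ‖P s * A s + (A s)ᵀ * P s + (C s)ᵀ * P s * C s + Qhat‖
                ≤ ‖P s * A s + (A s)ᵀ * P s + (C s)ᵀ * P s * C s‖ + ‖Qhat‖ := norm_add_le _ _
              _ ≤ (‖P s * A s + (A s)ᵀ * P s‖ + ‖(C s)ᵀ * P s * C s‖) + ‖Qhat‖ := by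
                  have := norm_add_le (P s * A s + (A s)ᵀ * P s) ((C s)ᵀ * P s * C s)
                  linarith
              _ ≤ ((‖P s * A s‖ + ‖(A s)ᵀ * P s‖) + ‖(C s)ᵀ * P s * C s‖) + ‖Qhat‖ := by
                  have := norm_add_le (P s * A s) ((A s)ᵀ * P s)
                  linarith
              _ ≤ ((‖P s‖ * ‖A s‖ + ‖A s‖ * ‖P s‖) + ‖C s‖ * ‖P s‖ * ‖C s‖) + ‖Qhat‖ := by
                  linarith
              _ = (2 * ‖A s‖ + ‖C s‖ ^ 2) * ‖P s‖ + ‖Qhat‖ := by ring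
    have huint : IntervalIntegrable
        (fun s => (2 * ‖A s‖ + ‖C s‖ ^ 2) * ‖P s‖) volume r T :=
      (hucont.mono hsub).intervalIntegrable
    have hconst : IntervalIntegrable (fun _ : ℝ => ‖Qhat‖) volume r T :=
      intervalIntegrable_const
    have hsplit : (∫ s in r..T, ((2 * ‖A s‖ + ‖C s‖ ^ 2) * ‖P s‖ + ‖Qhat‖))
        = (∫ s in r..T, (2 * ‖A s‖ + ‖C s‖ ^ 2) * ‖P s‖) + (T - r) * ‖Qhat‖ := by
      rw [intervalIntegral.integral_add huint hconst, intervalIntegral.integral_const,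
        smul_eq_mul]
    have hfin : (T - r) * ‖Qhat‖ ≤ T * ‖Qhat‖ := by
      apply mul_le_mul_of_nonneg_right _ (norm_nonneg _)
      linarith [hr.1]
    rw [hsplit] at h5
    linarith
  exact aux_gronwall_int hT hφcont hφ0 hPcont.norm key
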